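/- arXiv:1003.2846 — 2 statements merged into one kernel-verified Lean document; each statement's English description precedes it below -/
import Mathlib

section
/- Let a₀ ∈ ℂ, let l > 0, and let ε ∈ ℂ with |ε| = 1. Define f(z) = a₀ + (l/π)·Log((1+εz)/(1−εz)) on the open unit disk U. Then f is holomorphic and injective on U, |f'(0)| = 2l/π, and f(U) contains no closed vertical segment of length greater than l. -/
open Complex Metric Set

lemma aux_ne (ε z : ℂ) (hε : ‖ε‖ = 1) (hz : ‖z‖ < 1) :
    1 - ε * z ≠ 0 := by
  intro h
  have : ε * z = 1 := by linear_combination -h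
  have := congrArg (‖·‖) this
  rw [norm_mul, hε, one_mul, norm_one] at this
  linarith [this]

lemma aux_ne' (ε z : ℂ) (hε : ‖ε‖ = 1) (hz : ‖z‖ < 1) :
    1 + ε * z ≠ 0 := by
  intro h
  have : ε * z = -1 := by linear_combination h
  have := congrArg (‖·‖) this
  rw [norm_mul, hε, one_mul] at this
  simp at this
  linarith [this]

lemma aux_re (ε z : ℂ) (hε : ‖ε‖ = 1) (hz : ‖z‖ < 1) :
    0 < ((1 + ε * z) / (1 - ε * z)).re := by
  set w := ε * z with hw
  have habs : ‖w‖ < 1 := by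
    rw [hw, norm_mul, hε, one_mul]; exact hz
  have hns : Complex.normSq w < 1 := by
    rw [← Complex.sq_norm]; nlinarith [norm_nonneg w]
  have hne : 1 - w ≠ 0 := aux_ne ε z hε hz
  rw [Complex.div_re, ← add_div]
  apply div_pos
  · simp [Complex.add_re, Complex.sub_re, Complex.add_im, Complex.sub_im,
      Complex.normSq_apply] at hns ⊢
    nlinarith
  · exact Complex.normSq_pos.mpr hne

lemma aux_slit (ε z : ℂ) (hε : ‖ε‖ = 1) (hz : ‖z‖ < 1) :
    (1 + ε * z) / (1 - ε * z) ∈ Complex.slitPlane :=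
  Complex.mem_slitPlane_iff.mpr (Or.inl (aux_re ε z hε hz))

/-- The extremal functions `f(z) = a₀ + (l/π)·Log((1+εz)/(1-εz))` (with
`|ε| = 1`, `l > 0`) are holomorphic and injective on the unit disk, satisfy
`|f'(0)| = 2l/π`, and their image contains no closed vertical segment of length
greater than `l`. -/
theorem extremal_function_properties
    (a₀ : ℂ) (l : ℝ) (hl : 0 < l) (ε : ℂ) (hε : ‖ε‖ = 1)
    (f : ℂ → ℂ)
    (hf : ∀ z, f z = a₀ + ((l : ℂ) / (Real.pi : ℂ)) * Complex.log ((1 + ε * z) / (1 - ε * z))) :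
    DifferentiableOn ℂ f (ball (0 : ℂ) 1) ∧
    InjOn f (ball (0 : ℂ) 1) ∧
    ‖deriv f 0‖ = 2 * l / Real.pi ∧
    (∀ u₀ v₀ l' : ℝ, l' > l →
      ¬ (∀ t ∈ Icc v₀ (v₀ + l'),
        (u₀ : ℂ) + Complex.I * (t : ℂ) ∈ f '' ball (0 : ℂ) 1)) := by
  have hpi : (0:ℝ) < Real.pi := Real.pi_pos
  have hfeq : f = fun z => a₀ + ((l : ℂ) / (Real.pi : ℂ)) *
      Complex.log ((1 + ε * z) / (1 - ε * z)) := funext hf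
  have hc : ((l : ℂ) / (Real.pi : ℂ)) ≠ 0 := by
    apply div_ne_zero <;> simp [hl.ne', hpi.ne']
  have hεne : ε ≠ 0 := by
    intro h; rw [h] at hε; simp at hε
  refine ⟨?_, ?_, ?_, ?_⟩
  · -- differentiability
    rw [hfeq]
    intro z hz
    rw [mem_ball, dist_zero_right] at hz
    apply DifferentiableAt.differentiableWithinAt
    apply DifferentiableAt.const_add
    apply DifferentiableAt.const_mul
    exact (Complex.differentiableAt_log (aux_slit ε z hε hz)).comp z
      (DifferentiableAt.div (by fun_prop : DifferentiableAt ℂ (fun z => 1 + ε * z) z) (by fun_prop : DifferentiableAt ℂ (fun z => 1 - ε * z) z) (aux_ne ε z hε hz))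
  · -- injectivity
    intro z₁ h₁ z₂ h₂ heq
    rw [mem_ball, dist_zero_right] at h₁ h₂
    rw [hf, hf] at heq
    have hlog : Complex.log ((1 + ε * z₁) / (1 - ε * z₁)) =
        Complex.log ((1 + ε * z₂) / (1 - ε * z₂)) := by
      have := add_left_cancel heq
      exact mul_left_cancel₀ hc this
    have hq1 : (1 + ε * z₁) / (1 - ε * z₁) ≠ 0 :=
      div_ne_zero (aux_ne' ε z₁ hε h₁) (aux_ne ε z₁ hε h₁)
    have hq2 : (1 + ε * z₂) / (1 - ε * z₂) ≠ 0 :=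
      div_ne_zero (aux_ne' ε z₂ hε h₂) (aux_ne ε z₂ hε h₂)
    have hq : (1 + ε * z₁) / (1 - ε * z₁) = (1 + ε * z₂) / (1 - ε * z₂) := by
      rw [← Complex.exp_log hq1, ← Complex.exp_log hq2, hlog]
    rw [div_eq_div_iff (aux_ne ε z₁ hε h₁) (aux_ne ε z₂ hε h₂)] at hq
    have : (2 * ε) * z₁ = (2 * ε) * z₂ := by ring_nf; ring_nf at hq; linear_combination hq
    exact mul_left_cancel₀ (by simp [hεne]) this
  · -- derivative
    have h1 : HasDerivAt (fun z : ℂ => 1 + ε * z) ε 0 := by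
      simpa using ((hasDerivAt_id (0:ℂ)).const_mul ε).const_add 1
    have h2 : HasDerivAt (fun z : ℂ => 1 - ε * z) (-ε) 0 := by
      simpa using ((hasDerivAt_id (0:ℂ)).const_mul ε).const_sub 1
    have hden : (fun z : ℂ => 1 - ε * z) 0 ≠ 0 := by simp
    have hq : HasDerivAt (fun z : ℂ => (1 + ε * z) / (1 - ε * z)) (2 * ε) 0 := by
      have := h1.fun_div h2 hden
      refine this.congr_deriv ?_
      simp
      ring
    have hq0 : (fun z : ℂ => (1 + ε * z) / (1 - ε * z)) 0 = 1 := by simp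
    have hlog : HasDerivAt Complex.log ((1:ℂ)⁻¹) ((fun z : ℂ => (1 + ε * z) / (1 - ε * z)) 0) := by
      rw [hq0]
      exact Complex.hasDerivAt_log (by simp [Complex.mem_slitPlane_iff])
    have hcomp : HasDerivAt (fun z : ℂ => Complex.log ((1 + ε * z) / (1 - ε * z)))
        ((1:ℂ)⁻¹ * (2 * ε)) 0 := by have := hlog.comp 0 hq; exact this
    have hfd : HasDerivAt f (((l : ℂ) / (Real.pi : ℂ)) * ((1:ℂ)⁻¹ * (2 * ε))) 0 := by
      rw [hfeq]
      exact (hcomp.const_mul _).const_add a₀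
    rw [hfd.deriv]
    rw [norm_mul, norm_mul, norm_mul, hε, norm_div]
    simp [Complex.norm_real, abs_of_pos hl, abs_of_pos hpi]
    ring
  · -- no long vertical segments
    have him : ∀ z ∈ ball (0:ℂ) 1, |(f z).im - a₀.im| < l / 2 := by
      intro z hz
      rw [mem_ball, dist_zero_right] at hz
      have hre := aux_re ε z hε hz
      have harg : |Complex.arg ((1 + ε * z) / (1 - ε * z))| < Real.pi / 2 :=
        Complex.abs_arg_lt_pi_div_two_iff.mpr (Or.inl hre)
      have hcast : ((l : ℂ) / (Real.pi : ℂ)) = ((l / Real.pi : ℝ) : ℂ) := by push_cast; ring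
      rw [hf, hcast]
      rw [Complex.add_im, Complex.mul_im, Complex.ofReal_re, Complex.ofReal_im,
        Complex.log_im]
      simp only [zero_mul, add_zero]
      rw [add_sub_cancel_left, abs_mul, abs_of_pos (div_pos hl hpi)]
      calc l / Real.pi * |Complex.arg ((1 + ε * z) / (1 - ε * z))|
          < l / Real.pi * (Real.pi / 2) := by
            apply mul_lt_mul_of_pos_left harg (div_pos hl hpi)
        _ = l / 2 := by field_simp
    intro u₀ v₀ l' hl' h
    have h1 := h v₀ ⟨le_refl _, by linarith⟩
    have h2 := h (v₀ + l') ⟨by linarith, le_refl _⟩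
    obtain ⟨z₁, hz₁, hfz₁⟩ := h1
    obtain ⟨z₂, hz₂, hfz₂⟩ := h2
    have e1 : (f z₁).im = v₀ := by rw [hfz₁]; simp
    have e2 : (f z₂).im = v₀ + l' := by rw [hfz₂]; simp
    have i1 := him z₁ hz₁
    have i2 := him z₂ hz₂
    rw [e1, abs_lt] at i1
    rw [e2, abs_lt] at i2
    linarith
end

section
/- Let 0 < r < 1, let p(z) = (1/2)·Log((1+z)/(1−z)) on the open unit disk U, and let μ(w) = 1/(π·|sinh(2w)|). Then the integral of μ(w)² with respect to planar Lebesgue measure over the set {w ∈ ℂ : |Im w| < π/4} \ p(rU) is finite and equals (1/(2π))·ln(1/r), where rU = {z ∈ ℂ : |z| < r}. -/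
open Complex Metric Set MeasureTheory

private lemma one_sub_ne' (z : ℂ) (hz : ‖z‖ < 1) : (1 : ℂ) - z ≠ 0 := by
  intro h
  have hz1 : z = 1 := by linear_combination -h
  rw [hz1] at hz
  simp at hz

private lemma one_add_ne' (z : ℂ) (hz : ‖z‖ < 1) : (1 : ℂ) + z ≠ 0 := by
  intro h
  have hz1 : z = -1 := by linear_combination h
  rw [hz1] at hz
  simp at hz

private lemma re_pos' (z : ℂ) (hz : ‖z‖ < 1) : 0 < ((1 + z) / (1 - z)).re := by
  have h1 : (1 : ℂ) - z ≠ 0 := one_sub_ne' z hz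
  have hN : 0 < Complex.normSq (1 - z) := Complex.normSq_pos.2 h1
  have hlt : Complex.normSq z < 1 := by
    rw [Complex.normSq_eq_norm_sq]
    nlinarith [norm_nonneg z]
  rw [Complex.div_re, ← add_div]
  apply div_pos _ hN
  have key : (1 + z).re * (1 - z).re + (1 + z).im * (1 - z).im = 1 - Complex.normSq z := by
    simp [Complex.normSq_apply, Complex.add_re, Complex.add_im, Complex.sub_re, Complex.sub_im]
    ring
  rw [key]; linarith

private lemma u_ne' (z : ℂ) (hz : ‖z‖ < 1) : (1 + z) / (1 - z) ≠ 0 :=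
  div_ne_zero (one_add_ne' z hz) (one_sub_ne' z hz)

private lemma exp_two_p' (z : ℂ) (hz : ‖z‖ < 1) :
    Complex.exp (2 * ((1 / 2) * Complex.log ((1 + z) / (1 - z)))) = (1 + z) / (1 - z) := by
  have h : (2 : ℂ) * ((1 / 2) * Complex.log ((1 + z) / (1 - z)))
      = Complex.log ((1 + z) / (1 - z)) := by ring
  rw [h, Complex.exp_log (u_ne' z hz)]

private lemma one_sub_sq_ne' (z : ℂ) (hz : ‖z‖ < 1) : (1 : ℂ) - z ^ 2 ≠ 0 := by
  have h : (1 : ℂ) - z ^ 2 = (1 - z) * (1 + z) := by ring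
  rw [h]
  exact mul_ne_zero (one_sub_ne' z hz) (one_add_ne' z hz)

private lemma sinh_two_p' (z : ℂ) (hz : ‖z‖ < 1) :
    Complex.sinh (2 * ((1 / 2) * Complex.log ((1 + z) / (1 - z)))) = 2 * z / (1 - z ^ 2) := by
  have h1 := one_sub_ne' z hz
  have h2 := one_add_ne' z hz
  have hsq := one_sub_sq_ne' z hz
  have key := Complex.two_sinh (2 * ((1 / 2) * Complex.log ((1 + z) / (1 - z))))
  rw [Complex.exp_neg, exp_two_p' z hz] at key
  have h' : Complex.sinh (2 * ((1 / 2) * Complex.log ((1 + z) / (1 - z))))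
      = ((1 + z) / (1 - z) - ((1 + z) / (1 - z))⁻¹) / 2 := by
    linear_combination key / 2
  rw [h']
  field_simp
  ring

private lemma im_p' (z : ℂ) (hz : ‖z‖ < 1) :
    |((1 / 2 : ℂ) * Complex.log ((1 + z) / (1 - z))).im| < Real.pi / 4 := by
  have harg : |Complex.arg ((1 + z) / (1 - z))| < Real.pi / 2 :=
    Complex.abs_arg_lt_pi_div_two_iff.2 (Or.inl (re_pos' z hz))
  have him : ((1 / 2 : ℂ) * Complex.log ((1 + z) / (1 - z))).im
      = Complex.arg ((1 + z) / (1 - z)) / 2 := by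
    rw [Complex.mul_im]
    simp [Complex.log_im]
    ring
  rw [him, abs_div]
  rw [abs_of_pos (by norm_num : (0:ℝ) < 2)]
  linarith

private lemma cos_two_im' (w : ℂ) :
    Complex.normSq (Complex.cosh w) - Complex.normSq (Complex.sinh w) = Real.cos (2 * w.im) := by
  have h : Complex.cosh (w - (starRingEnd ℂ) w)
      = ((Complex.normSq (Complex.cosh w) - Complex.normSq (Complex.sinh w) : ℝ) : ℂ) := by
    rw [Complex.cosh_sub, Complex.cosh_conj, Complex.sinh_conj, Complex.mul_conj,
      Complex.mul_conj]
    push_cast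
    ring
  rw [Complex.sub_conj, Complex.cosh_mul_I, ← Complex.ofReal_cos] at h
  exact_mod_cast h.symm

private lemma cos_pos' (w : ℂ) (hw : |w.im| < Real.pi / 4) : 0 < Real.cos (2 * w.im) := by
  rw [abs_lt] at hw
  exact Real.cos_pos_of_mem_Ioo ⟨by linarith, by linarith⟩

private lemma cosh_ne' (w : ℂ) (hw : |w.im| < Real.pi / 4) : Complex.cosh w ≠ 0 := by
  have h := cos_two_im' w
  have hc := cos_pos' w hw
  have : 0 < Complex.normSq (Complex.cosh w) := by
    have := Complex.normSq_nonneg (Complex.sinh w)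
    linarith
  exact Complex.normSq_pos.1 this

private lemma tanh_abs_lt' (w : ℂ) (hw : |w.im| < Real.pi / 4) :
    ‖Complex.tanh w‖ < 1 := by
  have h := cos_two_im' w
  have hc := cos_pos' w hw
  have hcn := cosh_ne' w hw
  rw [Complex.tanh_eq_sinh_div_cosh, norm_div, div_lt_one (norm_pos_iff.2 hcn),
    Complex.norm_def, Complex.norm_def]
  exact Real.sqrt_lt_sqrt (Complex.normSq_nonneg _) (by linarith)

private lemma p_tanh' (w : ℂ) (hw : |w.im| < Real.pi / 4) :
    (1 / 2 : ℂ) * Complex.log ((1 + Complex.tanh w) / (1 - Complex.tanh w)) = w := by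
  have hc := cosh_ne' w hw
  have h1 : 1 + Complex.tanh w = Complex.exp w / Complex.cosh w := by
    rw [Complex.tanh_eq_sinh_div_cosh]
    field_simp
    exact Complex.cosh_add_sinh w
  have h2 : 1 - Complex.tanh w = Complex.exp (-w) / Complex.cosh w := by
    rw [Complex.tanh_eq_sinh_div_cosh]
    field_simp
    exact Complex.cosh_sub_sinh w
  have hu : (1 + Complex.tanh w) / (1 - Complex.tanh w) = Complex.exp (2 * w) := by
    rw [h1, h2]
    rw [div_div_div_cancel_right₀]
    · rw [Complex.exp_neg, div_inv_eq_mul, ← Complex.exp_add]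
      ring_nf
    · exact hc
  rw [hu]
  rw [abs_lt] at hw
  have hπ := Real.pi_pos
  rw [Complex.log_exp (x := 2 * w) (by simp [Complex.mul_im]; linarith) (by simp [Complex.mul_im]; linarith)]
  ring

private lemma image_ball' :
    (fun z : ℂ => (1 / 2) * Complex.log ((1 + z) / (1 - z))) '' ball (0 : ℂ) 1
      = {w : ℂ | |w.im| < Real.pi / 4} := by
  ext w
  constructor
  · rintro ⟨z, hz, rfl⟩
    exact im_p' z (by simpa [mem_ball_zero_iff] using hz)
  · intro hw
    exact ⟨Complex.tanh w,
      by simpa [mem_ball_zero_iff] using tanh_abs_lt' w hw, p_tanh' w hw⟩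

private lemma injOn_p' :
    InjOn (fun z : ℂ => (1 / 2) * Complex.log ((1 + z) / (1 - z))) (ball (0 : ℂ) 1) := by
  intro z₁ h₁ z₂ h₂ h
  have hz₁ : ‖z₁‖ < 1 := by simpa [mem_ball_zero_iff] using h₁
  have hz₂ : ‖z₂‖ < 1 := by simpa [mem_ball_zero_iff] using h₂
  have he := congrArg (fun t => Complex.exp (2 * t)) h
  simp only at he
  rw [exp_two_p' z₁ hz₁, exp_two_p' z₂ hz₂] at he
  have hcross := (div_eq_div_iff (one_sub_ne' z₁ hz₁) (one_sub_ne' z₂ hz₂)).1 he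
  linear_combination hcross / 2

private lemma hasDeriv_p' (z : ℂ) (hz : ‖z‖ < 1) :
    HasDerivAt (fun z : ℂ => (1 / 2) * Complex.log ((1 + z) / (1 - z))) ((1 - z ^ 2)⁻¹) z := by
  have h1 := one_sub_ne' z hz
  have h2 := one_add_ne' z hz
  have hd : HasDerivAt (fun z : ℂ => (1 + z) / (1 - z))
      ((1 * (1 - z) - (1 + z) * (-1)) / (1 - z) ^ 2) z :=
    ((hasDerivAt_id z).const_add 1).div ((hasDerivAt_id z).const_sub 1) h1
  have hlog : HasDerivAt Complex.log (((1 + z) / (1 - z))⁻¹) ((1 + z) / (1 - z)) :=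
    Complex.hasDerivAt_log (Complex.mem_slitPlane_iff.mpr (Or.inl (re_pos' z hz)))
  have hcomp : HasDerivAt (fun z : ℂ => Complex.log ((1 + z) / (1 - z)))
      (((1 + z) / (1 - z))⁻¹ * ((1 * (1 - z) - (1 + z) * (-1)) / (1 - z) ^ 2)) z :=
    by have h := hlog.comp z hd; exact h
  have H := hcomp.const_mul ((1 : ℂ) / 2)
  have hval : (1 / 2 : ℂ) * (((1 + z) / (1 - z))⁻¹ * ((1 * (1 - z) - (1 + z) * (-1)) / (1 - z) ^ 2))
      = (1 - z ^ 2)⁻¹ := by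
    have hsq := one_sub_sq_ne' z hz
    field_simp
    ring
  rw [hval] at H
  exact H

private lemma det_aux' (c : ℂ) :
    ((ContinuousLinearMap.smulRight (1 : ℂ →L[ℂ] ℂ) c).restrictScalars ℝ).det
      = Complex.normSq c := by
  have h : (((ContinuousLinearMap.smulRight (1 : ℂ →L[ℂ] ℂ) c).restrictScalars ℝ)
      : ℂ →ₗ[ℝ] ℂ) = (Algebra.lmul ℝ ℂ) c := by
    apply LinearMap.ext
    intro z
    simp [mul_comm]
  have h0 : ((ContinuousLinearMap.smulRight (1 : ℂ →L[ℂ] ℂ) c).restrictScalars ℝ).det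
      = LinearMap.det (((ContinuousLinearMap.smulRight (1 : ℂ →L[ℂ] ℂ) c).restrictScalars ℝ)
        : ℂ →ₗ[ℝ] ℂ) := rfl
  rw [h0, h, ← Algebra.norm_apply, Algebra.norm_complex_apply]

private lemma radial_int' (r : ℝ) (hr0 : 0 < r) :
    IntegrableOn (fun z : ℂ => (1 / (2 * Real.pi * ‖z‖)) ^ 2)
      (ball (0 : ℂ) 1 \ ball 0 r) volume := by
  have hπ := Real.pi_pos
  have hS : MeasurableSet (ball (0 : ℂ) 1 \ ball 0 r) :=
    measurableSet_ball.diff measurableSet_ball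
  have hvol : volume (ball (0 : ℂ) 1 \ ball 0 r) ≠ ⊤ :=
    ((measure_mono diff_subset).trans_lt measure_ball_lt_top).ne
  have hmeas : AEStronglyMeasurable (fun z : ℂ => (1 / (2 * Real.pi * ‖z‖)) ^ 2)
      volume :=
    ((measurable_const.div
      ((continuous_const.mul continuous_norm).measurable)).pow_const 2).aestronglyMeasurable
  have hbd : ∀ᵐ z ∂(volume.restrict (ball (0 : ℂ) 1 \ ball 0 r)),
      ‖(1 / (2 * Real.pi * ‖z‖)) ^ 2‖ ≤ (1 / (2 * Real.pi * r)) ^ 2 := by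
    filter_upwards [ae_restrict_mem hS] with z hz
    have hr : r ≤ ‖z‖ := by
      have := hz.2
      simp only [mem_ball_zero_iff, not_lt] at this
      exact this
    rw [Real.norm_eq_abs, _root_.abs_of_nonneg (sq_nonneg _)]
    have h2r : 0 < 2 * Real.pi * r := by positivity
    have h2z : 2 * Real.pi * r ≤ 2 * Real.pi * ‖z‖ := by nlinarith
    have := one_div_le_one_div_of_le h2r h2z
    have hnn : 0 ≤ 1 / (2 * Real.pi * ‖z‖) := by positivity
    nlinarith
  exact Measure.integrableOn_of_bounded hvol hmeas hbd

private lemma radial' (r : ℝ) (hr0 : 0 < r) (hr1 : r < 1) :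
    ∫ z in (ball (0 : ℂ) 1 \ ball 0 r), (1 / (2 * Real.pi * ‖z‖)) ^ 2
      = (1 / (2 * Real.pi)) * Real.log (1 / r) := by
  have hπ := Real.pi_pos
  have hS : MeasurableSet (ball (0 : ℂ) 1 \ ball 0 r) :=
    measurableSet_ball.diff measurableSet_ball
  set f : ℝ → ℝ := (Set.Ico r 1).indicator (fun t => (1 / (2 * Real.pi * t)) ^ 2) with hf
  have hmem : ∀ x : ℂ, x ∈ ball (0 : ℂ) 1 \ ball 0 r ↔ ‖x‖ ∈ Set.Ico r 1 := by
    intro x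
    simp [mem_ball_zero_iff, Set.mem_Ico, not_lt, and_comm]
  have hind : ∀ x : ℂ, (ball (0 : ℂ) 1 \ ball 0 r).indicator
      (fun z => (1 / (2 * Real.pi * ‖z‖)) ^ 2) x = f ‖x‖ := by
    intro x
    rw [hf]
    by_cases h : x ∈ ball (0 : ℂ) 1 \ ball 0 r
    · rw [Set.indicator_of_mem h, Set.indicator_of_mem ((hmem x).1 h)]
    · rw [Set.indicator_of_notMem h, Set.indicator_of_notMem (fun hc => h ((hmem x).2 hc))]
  rw [← integral_indicator hS]
  rw [show (fun x : ℂ => (ball (0 : ℂ) 1 \ ball 0 r).indicator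
      (fun z => (1 / (2 * Real.pi * ‖z‖)) ^ 2) x) = fun x : ℂ => f ‖x‖ from
    funext hind]
  rw [integral_fun_norm_addHaar volume f, Complex.finrank_real_complex]
  have hvol : (volume (ball (0 : ℂ) 1)).toReal = Real.pi := by
    rw [Complex.volume_ball]
    simp [ENNReal.toReal_mul]
  rw [measureReal_def, hvol]
  have hfun : EqOn (fun y : ℝ => y ^ (2 - 1) • f y)
      ((Set.Ico r 1).indicator (fun t : ℝ => (1 / (4 * Real.pi ^ 2)) * t⁻¹)) (Ioi 0) := by
    intro y hy
    simp only [hf]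
    by_cases h : y ∈ Set.Ico r 1
    · rw [Set.indicator_of_mem h, Set.indicator_of_mem h]
      have hy0 : y ≠ 0 := by
        have : r ≤ y := h.1
        intro h0; rw [h0] at this; linarith
      simp only [pow_one, smul_eq_mul]
      field_simp
      ring
    · rw [Set.indicator_of_notMem h, Set.indicator_of_notMem h, smul_zero]
  rw [setIntegral_congr_fun measurableSet_Ioi hfun]
  have hsub : Set.Ico r 1 ⊆ Set.Ioi 0 := fun y hy => lt_of_lt_of_le hr0 hy.1
  rw [setIntegral_indicator measurableSet_Ico, Set.inter_eq_self_of_subset_right hsub]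
  rw [MeasureTheory.integral_const_mul]
  have hinv : ∫ y in Set.Ico r 1, y⁻¹ = Real.log (1 / r) := by
    rw [integral_Ico_eq_integral_Ioo, ← integral_Ioc_eq_integral_Ioo,
      ← intervalIntegral.integral_of_le hr1.le,
      integral_inv (notMem_uIcc_of_lt hr0 one_pos)]
  rw [hinv]
  rw [nsmul_eq_mul, smul_eq_mul]
  field_simp
  ring

/-- For `0 < r < 1`, `p(z) = (1/2)·Log((1+z)/(1-z))` and
`μ(w) = 1/(π·|sinh(2w)|)`, the integral of `μ²` over the part of the strip
`{|Im w| < π/4}` outside `p(rU)` is finite and equals `(1/(2π))·ln(1/r)`. -/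
theorem integral_mu_sq_outside_image_of_small_disk (r : ℝ) (hr0 : 0 < r) (hr1 : r < 1) :
    IntegrableOn
      (fun w : ℂ => (1 / (Real.pi * ‖Complex.sinh (2 * w)‖)) ^ 2)
      ({w : ℂ | |w.im| < Real.pi / 4} \
        (fun z : ℂ => (1 / 2) * Complex.log ((1 + z) / (1 - z))) '' ball (0 : ℂ) r)
      volume ∧
    ∫ w in ({w : ℂ | |w.im| < Real.pi / 4} \
        (fun z : ℂ => (1 / 2) * Complex.log ((1 + z) / (1 - z))) '' ball (0 : ℂ) r),
      (1 / (Real.pi * ‖Complex.sinh (2 * w)‖)) ^ 2 ∂volume =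
      (1 / (2 * Real.pi)) * Real.log (1 / r) := by
  have hπ := Real.pi_pos
  set P : ℂ → ℂ := fun z : ℂ => (1 / 2) * Complex.log ((1 + z) / (1 - z)) with hP
  set g : ℂ → ℝ := fun w : ℂ => (1 / (Real.pi * ‖Complex.sinh (2 * w)‖)) ^ 2 with hg
  set S : Set ℂ := ball (0 : ℂ) 1 \ ball 0 r with hSdef
  have hS : MeasurableSet S := measurableSet_ball.diff measurableSet_ball
  have habs : ∀ z ∈ S, r ≤ ‖z‖ ∧ ‖z‖ < 1 := by
    intro z hz
    constructor
    · have := hz.2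
      simp only [mem_ball_zero_iff, not_lt] at this
      exact this
    · have := hz.1
      simpa [mem_ball_zero_iff] using this
  have hset : {w : ℂ | |w.im| < Real.pi / 4} \ P '' ball (0 : ℂ) r = P '' S := by
    rw [← image_ball', ← Set.inter_eq_self_of_subset_right (ball_subset_ball hr1.le),
      ← injOn_p'.image_diff]
  have hinjS : InjOn P S := injOn_p'.mono diff_subset
  set f' : ℂ → (ℂ →L[ℝ] ℂ) := fun z : ℂ =>
    (ContinuousLinearMap.smulRight (1 : ℂ →L[ℂ] ℂ) ((1 - z ^ 2)⁻¹)).restrictScalars ℝ with hf'def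
  have hf' : ∀ z ∈ S, HasFDerivWithinAt P (f' z) S z := by
    intro z hz
    exact (((hasDeriv_p' z (habs z hz).2).hasFDerivAt).restrictScalars ℝ).hasFDerivWithinAt
  have hEq : EqOn (fun z : ℂ => |(f' z).det| • g (P z))
      (fun z : ℂ => (1 / (2 * Real.pi * ‖z‖)) ^ 2) S := by
    intro z hz
    obtain ⟨hr, h1⟩ := habs z hz
    have hz0 : ‖z‖ ≠ 0 := ne_of_gt (lt_of_lt_of_le hr0 hr)
    have hsq := one_sub_sq_ne' z h1
    have hsqa : ‖1 - z ^ 2‖ ≠ 0 := norm_ne_zero_iff.2 hsq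
    simp only [hf'def, det_aux', hP, hg]
    rw [sinh_two_p' z h1]
    have habs2 : ‖2 * z / (1 - z ^ 2)‖
        = 2 * ‖z‖ / ‖1 - z ^ 2‖ := by
      rw [norm_div, norm_mul, Complex.norm_two]
    rw [habs2]
    rw [Complex.normSq_inv, Complex.normSq_eq_norm_sq]
    rw [_root_.abs_of_nonneg (by positivity), smul_eq_mul]
    field_simp
  constructor
  · rw [hset]
    rw [integrableOn_image_iff_integrableOn_abs_det_fderiv_smul volume hS hf' hinjS g]
    exact IntegrableOn.congr_fun (radial_int' r hr0) hEq.symm hS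
  · rw [hset]
    rw [integral_image_eq_integral_abs_det_fderiv_smul volume hS hf' hinjS g]
    rw [setIntegral_congr_fun hS hEq]
    exact radial' r hr0 hr1
end
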